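/- Let G be an unmixed bipartite graph with perfect matching {x_1,y_1},...,{x_n,y_n}. Then the following are equivalent: (a) for all i ≠ j, not both x_i ~ y_j and x_j ~ y_i; (b) G has a unique perfect matching. -/

import Mathlib

open SimpleGraph MvPolynomial

variable {V : Type*}

/-- `s` is an independent set of the graph `G`. -/
def IsIndep (G : SimpleGraph V) (s : Set V) : Prop :=
  s.Pairwise fun a b => ¬ G.Adj a b

/-- `s` is a maximal independent set of the graph `G`. -/
def IsMaxIndep (G : SimpleGraph V) (s : Set V) : Prop :=
  IsIndep G s ∧ ∀ t : Set V, IsIndep G t → s ⊆ t → s = t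

/-- `G` is unmixed: all maximal independent sets have the same cardinality. -/
def Unmixed (G : SimpleGraph V) : Prop :=
  ∀ s t : Set V, IsMaxIndep G s → IsMaxIndep G t → s.ncard = t.ncard

/-- `V1, V2` form a bipartition of the graph `G`. -/
def IsBipartition (G : SimpleGraph V) (V1 V2 : Set V) : Prop :=
  Disjoint V1 V2 ∧ V1 ∪ V2 = Set.univ ∧
    ∀ ⦃a b⦄, G.Adj a b → (a ∈ V1 ∧ b ∈ V2) ∨ (a ∈ V2 ∧ b ∈ V1)

/-- `G` has no isolated vertices. -/
def NoIsolated (G : SimpleGraph V) : Prop := ∀ v, ∃ w, G.Adj v w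

/-- The edges `{x i, y i}` form a perfect matching of `G`. -/
def PMatch (G : SimpleGraph V) (n : ℕ) (x y : Fin n → V) : Prop :=
  Function.Injective x ∧ Function.Injective y ∧ (∀ i j, x i ≠ y j) ∧
    (∀ v, (∃ i, v = x i) ∨ (∃ i, v = y i)) ∧ ∀ i, G.Adj (x i) (y i)

/-- Condition 1: for each `i` the induced subgraph on `N(x i) ∪ N(y i)` is complete
bipartite, i.e. every vertex of `N(y i)` is adjacent to every vertex of `N(x i)`. -/
def Cond1 (G : SimpleGraph V) (n : ℕ) (x y : Fin n → V) : Prop :=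
  ∀ i, ∀ a ∈ G.neighborSet (y i), ∀ b ∈ G.neighborSet (x i), G.Adj a b

/-- Condition 2: for `i ≠ j`, not both `x i ~ y j` and `x j ~ y i`. -/
def Cond2 (G : SimpleGraph V) (n : ℕ) (x y : Fin n → V) : Prop :=
  ∀ i j, i ≠ j → G.Adj (x i) (y j) → ¬ G.Adj (x j) (y i)

private lemma fixlemma {α : Type*} [Finite α] (r : α → α → Prop)
    (hrefl : ∀ a, r a a) (htrans : ∀ {a b c}, r a b → r b c → r a c)
    (hanti : ∀ a b, r a b → r b a → a = b)
    (f : α → α) (hf : Function.Injective f) (h : ∀ a, r a (f a)) : ∀ a, f a = a := by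
  have chain : ∀ m a, r a (f^[m] a) := by
    intro m
    induction m with
    | zero => simpa using hrefl
    | succ k ih =>
      intro a
      have := ih (f a)
      rw [← Function.iterate_succ_apply] at this
      exact htrans (h a) this
  intro a
  obtain ⟨m, l, hne, heq⟩ := Finite.exists_ne_map_eq_of_infinite (fun k : ℕ => f^[k] a)
  wlog hml : m < l generalizing m l
  · exact this l m hne.symm heq.symm (by omega)
  have : f^[l] a = f^[m] (f^[l - m] a) := by
    rw [← Function.iterate_add_apply]
    congr 1; omega
  have hper : f^[l - m] a = a := (hf.iterate m) (by rw [← this, ← heq])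
  obtain ⟨k, hk⟩ : ∃ k, l - m = k + 1 := ⟨l - m - 1, by omega⟩
  have h2 : r (f a) a := by
    have := chain k (f a)
    rwa [← Function.iterate_succ_apply, Nat.succ_eq_add_one, ← hk, hper] at this
  exact hanti _ _ h2 (h a)

private def matchSub (G : SimpleGraph V) {n : ℕ} (x y : Fin n → V) (π : Equiv.Perm (Fin n))
    (hπ : ∀ k, G.Adj (x k) (y (π k))) : G.Subgraph where
  verts := Set.univ
  Adj a b := ∃ k, (a = x k ∧ b = y (π k)) ∨ (a = y (π k) ∧ b = x k)
  adj_sub := by rintro a b ⟨k, ⟨rfl, rfl⟩ | ⟨rfl, rfl⟩⟩; exacts [hπ k, (hπ k).symm]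
  edge_vert := by simp
  symm := ⟨by rintro a b ⟨k, h | h⟩; exacts [⟨k, Or.inr ⟨h.2, h.1⟩⟩, ⟨k, Or.inl ⟨h.2, h.1⟩⟩]⟩

private lemma matchSub_pm (G : SimpleGraph V) {n : ℕ} (x y : Fin n → V)
    (hm : PMatch G n x y) (π : Equiv.Perm (Fin n)) (hπ : ∀ k, G.Adj (x k) (y (π k))) :
    (matchSub G x y π hπ).IsPerfectMatching := by
  obtain ⟨hxinj, hyinj, hxy, hcover, hadj⟩ := hm
  constructor
  · intro v hv
    rcases hcover v with ⟨i, rfl⟩ | ⟨i, rfl⟩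
    · refine ⟨y (π i), ⟨i, Or.inl ⟨rfl, rfl⟩⟩, ?_⟩
      rintro b ⟨k, ⟨hxk, rfl⟩ | ⟨hxk, _⟩⟩
      · rw [hxinj hxk]
      · exact absurd hxk (hxy i (π k))
    · refine ⟨x (π.symm i), ⟨π.symm i, Or.inr ⟨by simp, rfl⟩⟩, ?_⟩
      rintro b ⟨k, ⟨hyk, _⟩ | ⟨hyk, rfl⟩⟩
      · exact absurd hyk.symm (hxy k i)
      · have : i = π k := hyinj hyk
        rw [show k = π.symm i by simp [this]]
  · intro v; trivial

theorem stmt14 [Fintype V] (G : SimpleGraph V) {n : ℕ} (x y : Fin n → V)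
    (hb : IsBipartition G (Set.range x) (Set.range y))
    (hm : PMatch G n x y) (hu : Unmixed G) (h1 : Cond1 G n x y) :
    Cond2 G n x y ↔ ∃! M : G.Subgraph, M.IsPerfectMatching := by
  obtain ⟨hxinj, hyinj, hxy, hcover, hadj⟩ := hm
  have hm' : PMatch G n x y := ⟨hxinj, hyinj, hxy, hcover, hadj⟩
  constructor
  · intro h2
    -- canonical matching
    have hid : ∀ k, G.Adj (x k) (y ((Equiv.refl (Fin n)) k)) := fun k => hadj k
    refine ⟨matchSub G x y (Equiv.refl (Fin n)) hid, matchSub_pm G x y hm' _ hid, ?_⟩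
    intro M hM
    -- each x i is matched in M to some y j
    have hσ : ∀ i, ∃ j, M.Adj (x i) (y j) := by
      intro i
      obtain ⟨w, hw⟩ := (hM.1 (hM.2 (x i))).exists
      rcases hb.2.2 (M.adj_sub hw) with ⟨_, hw2⟩ | ⟨h1', _⟩
      · obtain ⟨j, rfl⟩ := hw2
        exact ⟨j, hw⟩
      · obtain ⟨j, hj⟩ := h1'
        exact absurd hj.symm (hxy i j)
    choose σ hσ using hσ
    have hσinj : Function.Injective σ := by
      intro i j hij
      have h1 : M.Adj (y (σ i)) (x i) := (hσ i).symm
      have h2' : M.Adj (y (σ i)) (x j) := by rw [hij]; exact (hσ j).symm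
      exact hxinj ((hM.1 (hM.2 (y (σ i)))).unique h1 h2')
    -- the order argument : σ = id
    have hfix : ∀ i, σ i = i := by
      refine fixlemma (fun i j => G.Adj (x i) (y j)) (fun i => hadj i) ?_ ?_ σ hσinj
        (fun i => M.adj_sub (hσ i))
      · intro i j k hij hjk
        exact h1 j (x i) hij.symm (y k) hjk
      · intro i j hij hji
        by_contra hne
        exact h2 i j hne hij hji
    have key : ∀ i, M.Adj (x i) (y i) := fun i => by
      have := hσ i; rwa [hfix i] at this
    -- M equals the canonical matching
    ext a b
    · simp only [matchSub, Set.mem_univ, iff_true]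
      exact hM.2 a
    · constructor
      · intro hab
        rcases hcover a with ⟨i, rfl⟩ | ⟨i, rfl⟩
        · have : b = y i := (hM.1 (hM.2 (x i))).unique hab (key i)
          exact ⟨i, Or.inl ⟨rfl, this⟩⟩
        · have : b = x i := (hM.1 (hM.2 (y i))).unique hab.symm.symm (key i).symm
          exact ⟨i, Or.inr ⟨rfl, this⟩⟩
      · rintro ⟨k, ⟨rfl, rfl⟩ | ⟨rfl, rfl⟩⟩
        exacts [key k, (key k).symm]
  · rintro ⟨M, hMpm, hMuniq⟩ i j hne hij hji
    have hswap : ∀ k, G.Adj (x k) (y ((Equiv.swap i j) k)) := by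
      intro k
      rcases eq_or_ne k i with rfl | hki
      · rwa [Equiv.swap_apply_left]
      rcases eq_or_ne k j with rfl | hkj
      · rwa [Equiv.swap_apply_right]
      · rw [Equiv.swap_apply_of_ne_of_ne hki hkj]; exact hadj k
    have hid : ∀ k, G.Adj (x k) (y ((Equiv.refl (Fin n)) k)) := fun k => hadj k
    have e1 : matchSub G x y (Equiv.refl (Fin n)) hid = M :=
      hMuniq _ (matchSub_pm G x y hm' _ hid)
    have e2 : matchSub G x y (Equiv.swap i j) hswap = M :=
      hMuniq _ (matchSub_pm G x y hm' _ hswap)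
    have hAdj : (matchSub G x y (Equiv.swap i j) hswap).Adj (x i) (y i) := by
      rw [e2, ← e1]
      exact ⟨i, Or.inl ⟨rfl, rfl⟩⟩
    obtain ⟨k, ⟨hxk, hyk⟩ | ⟨hxk, _⟩⟩ := hAdj
    · have hki : k = i := hxinj hxk.symm
      subst hki
      rw [Equiv.swap_apply_left] at hyk
      exact hne (hyinj hyk)
    · exact hxy i (Equiv.swap i j k) hxk
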